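/- Define on Ω = {(x,y) ∈ ℝ² : x > 0} (so that R := √(x² + y²) > 0) the functions u(x,y) = −2y/R³, f(x,y) = 2x²/R³, p(x,y) = x²(x² − 8y²)/(2(x² + y²)⁴). Then (subscripts denoting partial derivatives): f_xx + f_yy − f_x/x = 0, p_x = (f_y² − f_x²)/(2x), p_y = −f_x f_y/x, f_x = x·u_y, f_y = −x·u_x, and the dust density ρ = (f_x² + f_y²)/(x²·e^p) equals 4(x² + 4y²)/((x² + y²)⁴·e^p). -/

import Mathlib

/-- Partial derivative with respect to the first coordinate of `ℝ × ℝ`. -/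
noncomputable def pdx (f : ℝ × ℝ → ℝ) (p : ℝ × ℝ) : ℝ := fderiv ℝ f p (1, 0)

/-- Partial derivative with respect to the second coordinate of `ℝ × ℝ`. -/
noncomputable def pdy (f : ℝ × ℝ → ℝ) (p : ℝ × ℝ) : ℝ := fderiv ℝ f p (0, 1)

noncomputable def D2 (a b : ℝ) : ℝ × ℝ →L[ℝ] ℝ :=
  a • (ContinuousLinearMap.fst ℝ ℝ ℝ) + b • (ContinuousLinearMap.snd ℝ ℝ ℝ)

lemma D2_apply (a b : ℝ) (v : ℝ × ℝ) : D2 a b v = a * v.1 + b * v.2 := by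
  simp [D2, smul_eq_mul]

lemma hasFDerivAt_congr_fun {f g : ℝ × ℝ → ℝ} {D : ℝ × ℝ →L[ℝ] ℝ} {q : ℝ × ℝ}
    (h : HasFDerivAt f D q) (hfg : ∀ z, g z = f z) : HasFDerivAt g D q :=
  h.congr_of_eventuallyEq (Filter.Eventually.of_forall hfg)

lemma hasFDerivAt_X (q : ℝ × ℝ) : HasFDerivAt (fun z : ℝ × ℝ => z.1) (D2 1 0) q := by
  have := hasFDerivAt_fst (𝕜 := ℝ) (p := q)
  refine this.congr_fderiv ?_
  apply ContinuousLinearMap.ext; intro v; simp [D2_apply]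

lemma hasFDerivAt_Y (q : ℝ × ℝ) : HasFDerivAt (fun z : ℝ × ℝ => z.2) (D2 0 1) q := by
  have := hasFDerivAt_snd (𝕜 := ℝ) (p := q)
  refine this.congr_fderiv ?_
  apply ContinuousLinearMap.ext; intro v; simp [D2_apply]

lemma hasFDerivAt_poly_mul {c d : ℝ × ℝ → ℝ} {ca cb da db : ℝ} {q : ℝ × ℝ}
    (hc : HasFDerivAt c (D2 ca cb) q) (hd : HasFDerivAt d (D2 da db) q) :
    HasFDerivAt (fun z => c z * d z)
      (D2 (c q * da + d q * ca) (c q * db + d q * cb)) q := by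
  have := hc.mul hd
  refine this.congr_fderiv ?_
  apply ContinuousLinearMap.ext; intro v
  simp [D2_apply, smul_eq_mul]; ring

lemma hasFDerivAt_poly_add {c d : ℝ × ℝ → ℝ} {ca cb da db : ℝ} {q : ℝ × ℝ}
    (hc : HasFDerivAt c (D2 ca cb) q) (hd : HasFDerivAt d (D2 da db) q) :
    HasFDerivAt (fun z => c z + d z) (D2 (ca + da) (cb + db)) q := by
  have := hc.add hd
  refine this.congr_fderiv ?_
  apply ContinuousLinearMap.ext; intro v
  simp [D2_apply]; ring

lemma hasFDerivAt_poly_sub {c d : ℝ × ℝ → ℝ} {ca cb da db : ℝ} {q : ℝ × ℝ}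
    (hc : HasFDerivAt c (D2 ca cb) q) (hd : HasFDerivAt d (D2 da db) q) :
    HasFDerivAt (fun z => c z - d z) (D2 (ca - da) (cb - db)) q := by
  have := hc.sub hd
  refine this.congr_fderiv ?_
  apply ContinuousLinearMap.ext; intro v
  simp [D2_apply]; ring

lemma hasFDerivAt_const' (k : ℝ) (q : ℝ × ℝ) :
    HasFDerivAt (fun _ : ℝ × ℝ => k) (D2 0 0) q := by
  have := hasFDerivAt_const (𝕜 := ℝ) k q
  refine this.congr_fderiv ?_
  apply ContinuousLinearMap.ext; intro v; simp [D2_apply]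

lemma hasFDerivAt_S (q : ℝ × ℝ) :
    HasFDerivAt (fun z : ℝ × ℝ => z.1 ^ 2 + z.2 ^ 2) (D2 (2 * q.1) (2 * q.2)) q := by
  have h1 : HasFDerivAt (fun z : ℝ × ℝ => z.1 ^ 2)
      ((2 * q.1 ^ 1) • (ContinuousLinearMap.fst ℝ ℝ ℝ)) q := by
    simpa [Function.comp_def] using (hasDerivAt_pow 2 q.1).comp_hasFDerivAt q (hasFDerivAt_fst (𝕜 := ℝ))
  have h2 : HasFDerivAt (fun z : ℝ × ℝ => z.2 ^ 2)
      ((2 * q.2 ^ 1) • (ContinuousLinearMap.snd ℝ ℝ ℝ)) q := by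
    simpa [Function.comp_def] using (hasDerivAt_pow 2 q.2).comp_hasFDerivAt q (hasFDerivAt_snd (𝕜 := ℝ))
  have := h1.add h2
  refine this.congr_fderiv ?_
  apply ContinuousLinearMap.ext; intro v
  simp [D2, smul_eq_mul]

lemma hasFDerivAt_rt {q : ℝ × ℝ} (h : 0 < q.1 ^ 2 + q.2 ^ 2) :
    HasFDerivAt (fun z : ℝ × ℝ => Real.sqrt (z.1 ^ 2 + z.2 ^ 2))
      (D2 (q.1 / Real.sqrt (q.1 ^ 2 + q.2 ^ 2)) (q.2 / Real.sqrt (q.1 ^ 2 + q.2 ^ 2))) q := by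
  have hr : 0 < Real.sqrt (q.1 ^ 2 + q.2 ^ 2) := Real.sqrt_pos.2 h
  have := (Real.hasDerivAt_sqrt h.ne').comp_hasFDerivAt q (hasFDerivAt_S q)
  refine this.congr_fderiv ?_
  apply ContinuousLinearMap.ext; intro v
  simp [D2, smul_eq_mul, D2_apply]
  field_simp

lemma hasFDerivAt_poly_div {c d : ℝ × ℝ → ℝ} {ca cb da db : ℝ} {q : ℝ × ℝ}
    (hc : HasFDerivAt c (D2 ca cb) q) (hd : HasFDerivAt d (D2 da db) q)
    (hne : d q ≠ 0) :
    HasFDerivAt (fun z => c z / d z)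
      (D2 ((ca * d q - c q * da) / d q ^ 2) ((cb * d q - c q * db) / d q ^ 2)) q := by
  have hinv := (hasDerivAt_inv hne).comp_hasFDerivAt q hd
  have hmul := hc.mul hinv
  have heq : (fun z => c z / d z) = fun z => c z * (d z)⁻¹ := by
    funext z; rw [div_eq_mul_inv]
  rw [heq]
  refine hmul.congr_fderiv ?_
  apply ContinuousLinearMap.ext; intro v
  simp [D2_apply, smul_eq_mul]
  field_simp
  ring

lemma hasFDerivAt_rt3 {q : ℝ × ℝ} (h : 0 < q.1 ^ 2 + q.2 ^ 2) :
    HasFDerivAt (fun z : ℝ × ℝ => Real.sqrt (z.1 ^ 2 + z.2 ^ 2) ^ 3)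
      (D2 (3 * Real.sqrt (q.1 ^ 2 + q.2 ^ 2) * q.1)
          (3 * Real.sqrt (q.1 ^ 2 + q.2 ^ 2) * q.2)) q := by
  have hr : 0 < Real.sqrt (q.1 ^ 2 + q.2 ^ 2) := Real.sqrt_pos.2 h
  have := (hasDerivAt_pow 3 (Real.sqrt (q.1 ^ 2 + q.2 ^ 2))).comp_hasFDerivAt q
    (hasFDerivAt_rt h)
  have h2 : Real.sqrt (q.1 ^ 2 + q.2 ^ 2) ^ 2 = q.1 ^ 2 + q.2 ^ 2 := Real.sq_sqrt h.le
  refine this.congr_fderiv ?_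
  apply ContinuousLinearMap.ext; intro v
  simp [D2_apply, smul_eq_mul]
  field_simp

lemma hasFDerivAt_rt5 {q : ℝ × ℝ} (h : 0 < q.1 ^ 2 + q.2 ^ 2) :
    HasFDerivAt (fun z : ℝ × ℝ => Real.sqrt (z.1 ^ 2 + z.2 ^ 2) ^ 5)
      (D2 (5 * Real.sqrt (q.1 ^ 2 + q.2 ^ 2) ^ 3 * q.1)
          (5 * Real.sqrt (q.1 ^ 2 + q.2 ^ 2) ^ 3 * q.2)) q := by
  have hr : 0 < Real.sqrt (q.1 ^ 2 + q.2 ^ 2) := Real.sqrt_pos.2 h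
  have := (hasDerivAt_pow 5 (Real.sqrt (q.1 ^ 2 + q.2 ^ 2))).comp_hasFDerivAt q
    (hasFDerivAt_rt h)
  have h2 : Real.sqrt (q.1 ^ 2 + q.2 ^ 2) ^ 2 = q.1 ^ 2 + q.2 ^ 2 := Real.sq_sqrt h.le
  have hD : (((5 : ℕ) : ℝ) * Real.sqrt (q.1 ^ 2 + q.2 ^ 2) ^ (5 - 1)) •
      (D2 (q.1 / Real.sqrt (q.1 ^ 2 + q.2 ^ 2)) (q.2 / Real.sqrt (q.1 ^ 2 + q.2 ^ 2))) =
      D2 (5 * Real.sqrt (q.1 ^ 2 + q.2 ^ 2) ^ 3 * q.1)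
        (5 * Real.sqrt (q.1 ^ 2 + q.2 ^ 2) ^ 3 * q.2) := by
    apply ContinuousLinearMap.ext; intro v
    simp only [ContinuousLinearMap.coe_smul', Pi.smul_apply, D2_apply, smul_eq_mul]
    have h4 : Real.sqrt (q.1 ^ 2 + q.2 ^ 2) ^ (5 - 1) =
        Real.sqrt (q.1 ^ 2 + q.2 ^ 2) ^ 4 := rfl
    rw [h4]
    field_simp
    ring
  rw [hD] at this
  exact this

lemma hasFDerivAt_numfx (q : ℝ × ℝ) :
    HasFDerivAt (fun z : ℝ × ℝ => 4 * z.1 * z.2 ^ 2 - 2 * z.1 ^ 3)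
      (D2 (4 * q.2 ^ 2 - 6 * q.1 ^ 2) (8 * q.1 * q.2)) q := by
  have h1 := hasFDerivAt_poly_mul
    (hasFDerivAt_poly_mul (hasFDerivAt_const' 4 q) (hasFDerivAt_X q))
    (hasFDerivAt_poly_mul (hasFDerivAt_Y q) (hasFDerivAt_Y q))
  have h2 := hasFDerivAt_poly_mul (hasFDerivAt_const' 2 q)
    (hasFDerivAt_poly_mul (hasFDerivAt_X q)
      (hasFDerivAt_poly_mul (hasFDerivAt_X q) (hasFDerivAt_X q)))
  have h3 := hasFDerivAt_poly_sub h1 h2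
  have h4 := hasFDerivAt_congr_fun h3
    (g := fun z : ℝ × ℝ => 4 * z.1 * z.2 ^ 2 - 2 * z.1 ^ 3) (fun z => by ring)
  convert h4 using 2 <;> ring

lemma hasFDerivAt_numf (q : ℝ × ℝ) :
    HasFDerivAt (fun z : ℝ × ℝ => 2 * z.1 ^ 2) (D2 (4 * q.1) 0) q := by
  have h1 := hasFDerivAt_poly_mul (hasFDerivAt_const' 2 q)
    (hasFDerivAt_poly_mul (hasFDerivAt_X q) (hasFDerivAt_X q))
  have h4 := hasFDerivAt_congr_fun h1 (g := fun z : ℝ × ℝ => 2 * z.1 ^ 2) (fun z => by ring)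
  convert h4 using 2 <;> ring

lemma hasFDerivAt_numu (q : ℝ × ℝ) :
    HasFDerivAt (fun z : ℝ × ℝ => -2 * z.2) (D2 0 (-2)) q := by
  have h1 := hasFDerivAt_poly_mul (hasFDerivAt_const' (-2) q) (hasFDerivAt_Y q)
  have h4 := hasFDerivAt_congr_fun h1 (g := fun z : ℝ × ℝ => -2 * z.2) (fun z => by ring)
  convert h4 using 2 <;> ring

lemma hasFDerivAt_numfy (q : ℝ × ℝ) :
    HasFDerivAt (fun z : ℝ × ℝ => -6 * z.1 ^ 2 * z.2)
      (D2 (-12 * q.1 * q.2) (-6 * q.1 ^ 2)) q := by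
  have h1 := hasFDerivAt_poly_mul
    (hasFDerivAt_poly_mul (hasFDerivAt_const' (-6) q)
      (hasFDerivAt_poly_mul (hasFDerivAt_X q) (hasFDerivAt_X q)))
    (hasFDerivAt_Y q)
  have h4 := hasFDerivAt_congr_fun h1
    (g := fun z : ℝ × ℝ => -6 * z.1 ^ 2 * z.2) (fun z => by ring)
  convert h4 using 2 <;> ring

lemma hasFDerivAt_numP (q : ℝ × ℝ) :
    HasFDerivAt (fun z : ℝ × ℝ => z.1 ^ 2 * (z.1 ^ 2 - 8 * z.2 ^ 2))
      (D2 (4 * q.1 ^ 3 - 16 * q.1 * q.2 ^ 2) (-16 * q.1 ^ 2 * q.2)) q := by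
  have hx2 := hasFDerivAt_poly_mul (hasFDerivAt_X q) (hasFDerivAt_X q)
  have hy2 := hasFDerivAt_poly_mul (hasFDerivAt_Y q) (hasFDerivAt_Y q)
  have h1 := hasFDerivAt_poly_mul hx2
    (hasFDerivAt_poly_sub hx2 (hasFDerivAt_poly_mul (hasFDerivAt_const' 8 q) hy2))
  have h4 := hasFDerivAt_congr_fun h1
    (g := fun z : ℝ × ℝ => z.1 ^ 2 * (z.1 ^ 2 - 8 * z.2 ^ 2)) (fun z => by ring)
  convert h4 using 2 <;> ring

lemma hasFDerivAt_denP (q : ℝ × ℝ) :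
    HasFDerivAt (fun z : ℝ × ℝ => 2 * (z.1 ^ 2 + z.2 ^ 2) ^ 4)
      (D2 (16 * q.1 * (q.1 ^ 2 + q.2 ^ 2) ^ 3) (16 * q.2 * (q.1 ^ 2 + q.2 ^ 2) ^ 3)) q := by
  have hx2 := hasFDerivAt_poly_mul (hasFDerivAt_X q) (hasFDerivAt_X q)
  have hy2 := hasFDerivAt_poly_mul (hasFDerivAt_Y q) (hasFDerivAt_Y q)
  have hS := hasFDerivAt_poly_add hx2 hy2
  have h1 := hasFDerivAt_poly_mul (hasFDerivAt_const' 2 q)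
    (hasFDerivAt_poly_mul hS (hasFDerivAt_poly_mul hS (hasFDerivAt_poly_mul hS hS)))
  have h4 := hasFDerivAt_congr_fun h1
    (g := fun z : ℝ × ℝ => 2 * (z.1 ^ 2 + z.2 ^ 2) ^ 4) (fun z => by ring)
  convert h4 using 2 <;> ring

lemma hasFDerivAt_fF {q : ℝ × ℝ} (h : 0 < q.1 ^ 2 + q.2 ^ 2) :
    HasFDerivAt (fun z : ℝ × ℝ => 2 * z.1 ^ 2 / Real.sqrt (z.1 ^ 2 + z.2 ^ 2) ^ 3)
      (D2 ((4 * q.1 * q.2 ^ 2 - 2 * q.1 ^ 3) / Real.sqrt (q.1 ^ 2 + q.2 ^ 2) ^ 5)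
          ((-6 * q.1 ^ 2 * q.2) / Real.sqrt (q.1 ^ 2 + q.2 ^ 2) ^ 5)) q := by
  have hr : 0 < Real.sqrt (q.1 ^ 2 + q.2 ^ 2) := Real.sqrt_pos.2 h
  have h2 : Real.sqrt (q.1 ^ 2 + q.2 ^ 2) ^ 2 = q.1 ^ 2 + q.2 ^ 2 := Real.sq_sqrt h.le
  have h0 := hasFDerivAt_poly_div (hasFDerivAt_numf q) (hasFDerivAt_rt3 h)
    (by positivity)
  have e1 : (4 * q.1 * q.2 ^ 2 - 2 * q.1 ^ 3) / Real.sqrt (q.1 ^ 2 + q.2 ^ 2) ^ 5 =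
      (4 * q.1 * Real.sqrt (q.1 ^ 2 + q.2 ^ 2) ^ 3 -
        2 * q.1 ^ 2 * (3 * Real.sqrt (q.1 ^ 2 + q.2 ^ 2) * q.1)) /
        (Real.sqrt (q.1 ^ 2 + q.2 ^ 2) ^ 3) ^ 2 := by
    field_simp
    linear_combination (-4 * q.1) * h2
  have e2 : (-6 * q.1 ^ 2 * q.2) / Real.sqrt (q.1 ^ 2 + q.2 ^ 2) ^ 5 =
      (0 * Real.sqrt (q.1 ^ 2 + q.2 ^ 2) ^ 3 -
        2 * q.1 ^ 2 * (3 * Real.sqrt (q.1 ^ 2 + q.2 ^ 2) * q.2)) /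
        (Real.sqrt (q.1 ^ 2 + q.2 ^ 2) ^ 3) ^ 2 := by
    field_simp
    ring
  rw [e1, e2]
  exact h0

lemma hasFDerivAt_uF {q : ℝ × ℝ} (h : 0 < q.1 ^ 2 + q.2 ^ 2) :
    HasFDerivAt (fun z : ℝ × ℝ => -2 * z.2 / Real.sqrt (z.1 ^ 2 + z.2 ^ 2) ^ 3)
      (D2 ((6 * q.1 * q.2) / Real.sqrt (q.1 ^ 2 + q.2 ^ 2) ^ 5)
          ((4 * q.2 ^ 2 - 2 * q.1 ^ 2) / Real.sqrt (q.1 ^ 2 + q.2 ^ 2) ^ 5)) q := by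
  have hr : 0 < Real.sqrt (q.1 ^ 2 + q.2 ^ 2) := Real.sqrt_pos.2 h
  have h2 : Real.sqrt (q.1 ^ 2 + q.2 ^ 2) ^ 2 = q.1 ^ 2 + q.2 ^ 2 := Real.sq_sqrt h.le
  have h0 := hasFDerivAt_poly_div (hasFDerivAt_numu q) (hasFDerivAt_rt3 h)
    (by positivity)
  have e1 : (6 * q.1 * q.2) / Real.sqrt (q.1 ^ 2 + q.2 ^ 2) ^ 5 =
      (0 * Real.sqrt (q.1 ^ 2 + q.2 ^ 2) ^ 3 -
        -2 * q.2 * (3 * Real.sqrt (q.1 ^ 2 + q.2 ^ 2) * q.1)) /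
        (Real.sqrt (q.1 ^ 2 + q.2 ^ 2) ^ 3) ^ 2 := by
    field_simp
    ring
  have e2 : (4 * q.2 ^ 2 - 2 * q.1 ^ 2) / Real.sqrt (q.1 ^ 2 + q.2 ^ 2) ^ 5 =
      (-2 * Real.sqrt (q.1 ^ 2 + q.2 ^ 2) ^ 3 -
        -2 * q.2 * (3 * Real.sqrt (q.1 ^ 2 + q.2 ^ 2) * q.2)) /
        (Real.sqrt (q.1 ^ 2 + q.2 ^ 2) ^ 3) ^ 2 := by
    field_simp
    linear_combination (2) * h2
  rw [e1, e2]
  exact h0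

lemma hasFDerivAt_PF {q : ℝ × ℝ} (h : 0 < q.1 ^ 2 + q.2 ^ 2) :
    HasFDerivAt
      (fun z : ℝ × ℝ => z.1 ^ 2 * (z.1 ^ 2 - 8 * z.2 ^ 2) / (2 * (z.1 ^ 2 + z.2 ^ 2) ^ 4))
      (D2 ((-4 * q.1 ^ 5 + 52 * q.1 ^ 3 * q.2 ^ 2 - 16 * q.1 * q.2 ^ 4) /
            (2 * (q.1 ^ 2 + q.2 ^ 2) ^ 5))
          ((-12 * q.1 ^ 4 * q.2 + 24 * q.1 ^ 2 * q.2 ^ 3) / (q.1 ^ 2 + q.2 ^ 2) ^ 5)) q := by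
  have h0 := hasFDerivAt_poly_div (hasFDerivAt_numP q) (hasFDerivAt_denP q)
    (by positivity)
  have e1 : (-4 * q.1 ^ 5 + 52 * q.1 ^ 3 * q.2 ^ 2 - 16 * q.1 * q.2 ^ 4) /
        (2 * (q.1 ^ 2 + q.2 ^ 2) ^ 5) =
      ((4 * q.1 ^ 3 - 16 * q.1 * q.2 ^ 2) * (2 * (q.1 ^ 2 + q.2 ^ 2) ^ 4) -
        q.1 ^ 2 * (q.1 ^ 2 - 8 * q.2 ^ 2) * (16 * q.1 * (q.1 ^ 2 + q.2 ^ 2) ^ 3)) /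
        (2 * (q.1 ^ 2 + q.2 ^ 2) ^ 4) ^ 2 := by
    field_simp
    ring
  have e2 : (-12 * q.1 ^ 4 * q.2 + 24 * q.1 ^ 2 * q.2 ^ 3) / (q.1 ^ 2 + q.2 ^ 2) ^ 5 =
      ((-16 * q.1 ^ 2 * q.2) * (2 * (q.1 ^ 2 + q.2 ^ 2) ^ 4) -
        q.1 ^ 2 * (q.1 ^ 2 - 8 * q.2 ^ 2) * (16 * q.2 * (q.1 ^ 2 + q.2 ^ 2) ^ 3)) /
        (2 * (q.1 ^ 2 + q.2 ^ 2) ^ 4) ^ 2 := by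
    field_simp
    ring
  rw [e1, e2]
  exact h0

lemma hasFDerivAt_fxF {q : ℝ × ℝ} (h : 0 < q.1 ^ 2 + q.2 ^ 2) :
    HasFDerivAt
      (fun z : ℝ × ℝ => (4 * z.1 * z.2 ^ 2 - 2 * z.1 ^ 3) / Real.sqrt (z.1 ^ 2 + z.2 ^ 2) ^ 5)
      (D2 ((4 * q.1 ^ 4 - 22 * q.1 ^ 2 * q.2 ^ 2 + 4 * q.2 ^ 4) /
            Real.sqrt (q.1 ^ 2 + q.2 ^ 2) ^ 7)
          ((18 * q.1 ^ 3 * q.2 - 12 * q.1 * q.2 ^ 3) /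
            Real.sqrt (q.1 ^ 2 + q.2 ^ 2) ^ 7)) q := by
  have hr : 0 < Real.sqrt (q.1 ^ 2 + q.2 ^ 2) := Real.sqrt_pos.2 h
  have h2 : Real.sqrt (q.1 ^ 2 + q.2 ^ 2) ^ 2 = q.1 ^ 2 + q.2 ^ 2 := Real.sq_sqrt h.le
  have h0 := hasFDerivAt_poly_div (hasFDerivAt_numfx q) (hasFDerivAt_rt5 h)
    (by positivity)
  have e1 : (4 * q.1 ^ 4 - 22 * q.1 ^ 2 * q.2 ^ 2 + 4 * q.2 ^ 4) /
        Real.sqrt (q.1 ^ 2 + q.2 ^ 2) ^ 7 =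
      ((4 * q.2 ^ 2 - 6 * q.1 ^ 2) * Real.sqrt (q.1 ^ 2 + q.2 ^ 2) ^ 5 -
        (4 * q.1 * q.2 ^ 2 - 2 * q.1 ^ 3) * (5 * Real.sqrt (q.1 ^ 2 + q.2 ^ 2) ^ 3 * q.1)) /
        (Real.sqrt (q.1 ^ 2 + q.2 ^ 2) ^ 5) ^ 2 := by
    field_simp
    linear_combination ((6 * q.1 ^ 2 - 4 * q.2 ^ 2)) * h2
  have e2 : (18 * q.1 ^ 3 * q.2 - 12 * q.1 * q.2 ^ 3) / Real.sqrt (q.1 ^ 2 + q.2 ^ 2) ^ 7 =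
      (8 * q.1 * q.2 * Real.sqrt (q.1 ^ 2 + q.2 ^ 2) ^ 5 -
        (4 * q.1 * q.2 ^ 2 - 2 * q.1 ^ 3) * (5 * Real.sqrt (q.1 ^ 2 + q.2 ^ 2) ^ 3 * q.2)) /
        (Real.sqrt (q.1 ^ 2 + q.2 ^ 2) ^ 5) ^ 2 := by
    field_simp
    linear_combination (-8 * q.1 * q.2) * h2
  rw [e1, e2]
  exact h0

lemma hasFDerivAt_fyF {q : ℝ × ℝ} (h : 0 < q.1 ^ 2 + q.2 ^ 2) :
    HasFDerivAt
      (fun z : ℝ × ℝ => -6 * z.1 ^ 2 * z.2 / Real.sqrt (z.1 ^ 2 + z.2 ^ 2) ^ 5)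
      (D2 ((18 * q.1 ^ 3 * q.2 - 12 * q.1 * q.2 ^ 3) / Real.sqrt (q.1 ^ 2 + q.2 ^ 2) ^ 7)
          ((-6 * q.1 ^ 4 + 24 * q.1 ^ 2 * q.2 ^ 2) / Real.sqrt (q.1 ^ 2 + q.2 ^ 2) ^ 7)) q := by
  have hr : 0 < Real.sqrt (q.1 ^ 2 + q.2 ^ 2) := Real.sqrt_pos.2 h
  have h2 : Real.sqrt (q.1 ^ 2 + q.2 ^ 2) ^ 2 = q.1 ^ 2 + q.2 ^ 2 := Real.sq_sqrt h.le
  have h0 := hasFDerivAt_poly_div (hasFDerivAt_numfy q) (hasFDerivAt_rt5 h)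
    (by positivity)
  have e1 : (18 * q.1 ^ 3 * q.2 - 12 * q.1 * q.2 ^ 3) / Real.sqrt (q.1 ^ 2 + q.2 ^ 2) ^ 7 =
      ((-12 * q.1 * q.2) * Real.sqrt (q.1 ^ 2 + q.2 ^ 2) ^ 5 -
        (-6 * q.1 ^ 2 * q.2) * (5 * Real.sqrt (q.1 ^ 2 + q.2 ^ 2) ^ 3 * q.1)) /
        (Real.sqrt (q.1 ^ 2 + q.2 ^ 2) ^ 5) ^ 2 := by
    field_simp
    linear_combination (12 * q.1 * q.2) * h2
  have e2 : (-6 * q.1 ^ 4 + 24 * q.1 ^ 2 * q.2 ^ 2) / Real.sqrt (q.1 ^ 2 + q.2 ^ 2) ^ 7 =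
      ((-6 * q.1 ^ 2) * Real.sqrt (q.1 ^ 2 + q.2 ^ 2) ^ 5 -
        (-6 * q.1 ^ 2 * q.2) * (5 * Real.sqrt (q.1 ^ 2 + q.2 ^ 2) ^ 3 * q.2)) /
        (Real.sqrt (q.1 ^ 2 + q.2 ^ 2) ^ 5) ^ 2 := by
    field_simp
    linear_combination (6 * q.1 ^ 2) * h2
  rw [e1, e2]
  exact h0

lemma pdx_of {f : ℝ × ℝ → ℝ} {a b : ℝ} {q : ℝ × ℝ} (h : HasFDerivAt f (D2 a b) q) :
    pdx f q = a := by
  rw [pdx, h.fderiv]; simp [D2_apply]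

lemma pdy_of {f : ℝ × ℝ → ℝ} {a b : ℝ} {q : ℝ × ℝ} (h : HasFDerivAt f (D2 a b) q) :
    pdy f q = b := by
  rw [pdy, h.fderiv]; simp [D2_apply]


/-- **The 'point dipole' row of Table 1: the Bonnor–Bonnor cloud.**
On `{x > 0}`, with `R = √(x² + y²)`, the functions `u = −2y/R³`,
`f = 2x²/R³`, `p = x²(x² − 8y²)/(2(x² + y²)⁴)` satisfy the van Stockum dust
equations, the companion relations `f_x = x u_y`, `f_y = −x u_x`, and the dust
density `(f_x² + f_y²)/(x² e^p)` equals `4(x² + 4y²)/((x² + y²)⁴ e^p)`. -/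
theorem point_dipole_example
    (u f P : ℝ × ℝ → ℝ)
    (hu : ∀ p : ℝ × ℝ, u p = -2 * p.2 / Real.sqrt (p.1 ^ 2 + p.2 ^ 2) ^ 3)
    (hf : ∀ p : ℝ × ℝ, f p = 2 * p.1 ^ 2 / Real.sqrt (p.1 ^ 2 + p.2 ^ 2) ^ 3)
    (hP : ∀ p : ℝ × ℝ,
      P p = p.1 ^ 2 * (p.1 ^ 2 - 8 * p.2 ^ 2) / (2 * (p.1 ^ 2 + p.2 ^ 2) ^ 4)) :
    ∀ p : ℝ × ℝ, 0 < p.1 →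
      (pdx (pdx f) p + pdy (pdy f) p - pdx f p / p.1 = 0) ∧
      (pdx P p = ((pdy f p) ^ 2 - (pdx f p) ^ 2) / (2 * p.1)) ∧
      (pdy P p = -(pdx f p * pdy f p) / p.1) ∧
      (pdx f p = p.1 * pdy u p) ∧
      (pdy f p = -p.1 * pdx u p) ∧
      (((pdx f p) ^ 2 + (pdy f p) ^ 2) / (p.1 ^ 2 * Real.exp (P p)) =
        4 * (p.1 ^ 2 + 4 * p.2 ^ 2) / ((p.1 ^ 2 + p.2 ^ 2) ^ 4 * Real.exp (P p))) := by
  have hue : u = fun z : ℝ × ℝ => -2 * z.2 / Real.sqrt (z.1 ^ 2 + z.2 ^ 2) ^ 3 := funext hu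
  have hfe : f = fun z : ℝ × ℝ => 2 * z.1 ^ 2 / Real.sqrt (z.1 ^ 2 + z.2 ^ 2) ^ 3 := funext hf
  have hPe : P = fun z : ℝ × ℝ =>
      z.1 ^ 2 * (z.1 ^ 2 - 8 * z.2 ^ 2) / (2 * (z.1 ^ 2 + z.2 ^ 2) ^ 4) := funext hP
  subst hue hfe hPe
  intro p hp
  have hs : 0 < p.1 ^ 2 + p.2 ^ 2 := by nlinarith [sq_nonneg p.2, sq_nonneg p.1]
  have hr : 0 < Real.sqrt (p.1 ^ 2 + p.2 ^ 2) := Real.sqrt_pos.2 hs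
  have h2 : Real.sqrt (p.1 ^ 2 + p.2 ^ 2) ^ 2 = p.1 ^ 2 + p.2 ^ 2 := Real.sq_sqrt hs.le
  have key : Real.sqrt (p.1 ^ 2 + p.2 ^ 2) ^ 10 = (p.1 ^ 2 + p.2 ^ 2) ^ 5 := by
    calc Real.sqrt (p.1 ^ 2 + p.2 ^ 2) ^ 10
        = (Real.sqrt (p.1 ^ 2 + p.2 ^ 2) ^ 2) ^ 5 := by ring
      _ = (p.1 ^ 2 + p.2 ^ 2) ^ 5 := by rw [h2]
  have hfx := pdx_of (hasFDerivAt_fF hs)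
  have hfy := pdy_of (hasFDerivAt_fF hs)
  have hux := pdx_of (hasFDerivAt_uF hs)
  have huy := pdy_of (hasFDerivAt_uF hs)
  have hPx := pdx_of (hasFDerivAt_PF hs)
  have hPy := pdy_of (hasFDerivAt_PF hs)
  have hU : IsOpen {z : ℝ × ℝ | 0 < z.1 ^ 2 + z.2 ^ 2} :=
    isOpen_lt continuous_const (by fun_prop)
  have hmem : {z : ℝ × ℝ | 0 < z.1 ^ 2 + z.2 ^ 2} ∈ nhds p := hU.mem_nhds hs
  have hev1 : (pdx fun z : ℝ × ℝ => 2 * z.1 ^ 2 / Real.sqrt (z.1 ^ 2 + z.2 ^ 2) ^ 3)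
      =ᶠ[nhds p]
      (fun z : ℝ × ℝ => (4 * z.1 * z.2 ^ 2 - 2 * z.1 ^ 3) / Real.sqrt (z.1 ^ 2 + z.2 ^ 2) ^ 5) :=
    Filter.eventuallyEq_of_mem hmem (fun z hz => pdx_of (hasFDerivAt_fF hz))
  have hev2 : (pdy fun z : ℝ × ℝ => 2 * z.1 ^ 2 / Real.sqrt (z.1 ^ 2 + z.2 ^ 2) ^ 3)
      =ᶠ[nhds p]
      (fun z : ℝ × ℝ => -6 * z.1 ^ 2 * z.2 / Real.sqrt (z.1 ^ 2 + z.2 ^ 2) ^ 5) :=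
    Filter.eventuallyEq_of_mem hmem (fun z hz => pdy_of (hasFDerivAt_fF hz))
  have hxx : pdx (pdx fun z : ℝ × ℝ => 2 * z.1 ^ 2 / Real.sqrt (z.1 ^ 2 + z.2 ^ 2) ^ 3) p =
      (4 * p.1 ^ 4 - 22 * p.1 ^ 2 * p.2 ^ 2 + 4 * p.2 ^ 4) /
        Real.sqrt (p.1 ^ 2 + p.2 ^ 2) ^ 7 := by
    rw [pdx, hev1.fderiv_eq, (hasFDerivAt_fxF hs).fderiv]; simp [D2_apply]
  have hyy : pdy (pdy fun z : ℝ × ℝ => 2 * z.1 ^ 2 / Real.sqrt (z.1 ^ 2 + z.2 ^ 2) ^ 3) p =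
      (-6 * p.1 ^ 4 + 24 * p.1 ^ 2 * p.2 ^ 2) / Real.sqrt (p.1 ^ 2 + p.2 ^ 2) ^ 7 := by
    rw [pdy, hev2.fderiv_eq, (hasFDerivAt_fyF hs).fderiv]; simp [D2_apply]
  refine ⟨?_, ?_, ?_, ?_, ?_, ?_⟩
  · rw [hxx, hyy, hfx]
    field_simp
    linear_combination (2 *
      (p.1 ^ 2 - 2 * p.2 ^ 2)) * h2
  · rw [hPx, hfx, hfy]
    field_simp
    linear_combination (-16 * p.2 ^ 4 + 52 * p.1 ^ 2 * p.2 ^ 2 -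
      4 * p.1 ^ 4) * key
  · rw [hPy, hfx, hfy]
    field_simp
    linear_combination (24 * p.2 ^ 3 - 12 * p.1 ^ 2 * p.2) * key
  · rw [hfx, huy]
    field_simp
  · rw [hfy, hux]
    field_simp
  · have h6 : (((4 * p.1 * p.2 ^ 2 - 2 * p.1 ^ 3) / Real.sqrt (p.1 ^ 2 + p.2 ^ 2) ^ 5) ^ 2 +
        ((-6 * p.1 ^ 2 * p.2) / Real.sqrt (p.1 ^ 2 + p.2 ^ 2) ^ 5) ^ 2) / p.1 ^ 2 =
        4 * (p.1 ^ 2 + 4 * p.2 ^ 2) / ((p.1 ^ 2 + p.2 ^ 2) ^ 4) := by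
      field_simp
      linear_combination (-4 * (p.1 ^ 2 + 4 * p.2 ^ 2)) * key
    rw [hfx, hfy, div_mul_eq_div_div, div_mul_eq_div_div, h6]
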